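/- Let 0 < μ_* ≤ μ^* be real constants and let m ∈ [μ_*, μ^*]. For ξ = (ξ₁, ξ₂, ξ₃) ∈ ℝ³ define the quadratic form Q(ξ) = mξ₁² + mξ₃² − 2(m − μ_*/2)ξ₁ξ₃ + (4m − μ_*)ξ₂². Then (μ_*/2)(ξ₁² + ξ₂² + ξ₃²) ≤ Q(ξ) ≤ 4μ^*(ξ₁² + ξ₂² + ξ₃²) for all ξ ∈ ℝ³; that is, the coefficient tensor l^μ of the divergence-form reformulation of the operator L_μ with μ_* ≤ μ ≤ μ^* is uniformly elliptic. -/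
import Mathlib

/-- Uniform ellipticity of the coefficient tensor of the divergence-form reformulation of
`L_μ`: for `μ⋆ ≤ m ≤ μ⁺`, the quadratic form
`Q(ξ) = mξ₁² + mξ₃² − 2(m − μ⋆/2)ξ₁ξ₃ + (4m − μ⋆)ξ₂²` satisfies
`(μ⋆/2)|ξ|² ≤ Q(ξ) ≤ 4μ⁺|ξ|²` for all `ξ ∈ ℝ³`. -/
theorem ellipticity_of_Lmu_coefficients
    (μs μb m : ℝ) (hμs : 0 < μs) (hμsb : μs ≤ μb) (hm : m ∈ Set.Icc μs μb)
    (Q : ℝ × ℝ × ℝ → ℝ)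
    (hQ : Q = fun ξ => m * ξ.1 ^ 2 + m * ξ.2.2 ^ 2
      - 2 * (m - μs / 2) * ξ.1 * ξ.2.2 + (4 * m - μs) * ξ.2.1 ^ 2) :
    ∀ ξ : ℝ × ℝ × ℝ,
      μs / 2 * (ξ.1 ^ 2 + ξ.2.1 ^ 2 + ξ.2.2 ^ 2) ≤ Q ξ ∧
      Q ξ ≤ 4 * μb * (ξ.1 ^ 2 + ξ.2.1 ^ 2 + ξ.2.2 ^ 2) := by
  obtain ⟨hm1, hm2⟩ := hm
  subst hQ
  intro ⟨a, b, c⟩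
  constructor
  · simp only
    nlinarith [sq_nonneg (a - c), sq_nonneg b, sq_nonneg a, sq_nonneg c]
  · simp only
    nlinarith [sq_nonneg (a + c), sq_nonneg (a - c), sq_nonneg b, sq_nonneg a, sq_nonneg c]
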